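/- Let M be a von Neumann algebra acting on a complex Hilbert space H and let a be a positive element of M. Then a belongs to the center of M if and only if |⟨u a ξ, ξ⟩| ≤ ⟨a ξ, ξ⟩ for every unitary element u of M and every vector ξ ∈ H. -/

import Mathlib

open scoped ComplexOrder ComplexInnerProductSpace

set_option maxHeartbeats 2000000
set_option synthInstance.maxHeartbeats 1000000

noncomputable section

namespace GardnerAux

variable {H : Type*} [NormedAddCommGroup H] [InnerProductSpace ℂ H] [CompleteSpace H]

/-- The exponential of an element of a von Neumann algebra stays in the algebra. -/
theorem exp_mem (M : VonNeumannAlgebra H) (x : H →L[ℂ] H) (hx : x ∈ M) :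
    NormedSpace.exp x ∈ M := by
  have h1 : NormedSpace.exp x ∈ Set.centralizer (Set.centralizer (M : Set (H →L[ℂ] H))) := by
    rw [Set.mem_centralizer_iff]
    intro z hz
    have hcomm : Commute x z := hz x hx
    exact hcomm.exp_left.symm
  rw [M.centralizer_centralizer] at h1
  exact h1

/-- Core step: the Gardner inequality forces `a` to commute with every selfadjoint
element of `M`. -/
theorem comm_selfadjoint (M : VonNeumannAlgebra H) (a : H →L[ℂ] H)
    (hpos : a.IsPositive)
    (hyp : ∀ u : H →L[ℂ] H, u ∈ M → star u * u = 1 → u * star u = 1 →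
        ∀ ξ : H, (‖⟪(u * a) ξ, ξ⟫‖ : ℂ) ≤ ⟪a ξ, ξ⟫)
    (h : H →L[ℂ] H) (hM : h ∈ M) (hsa : IsSelfAdjoint h) : a * h = h * a := by
  set c : H →L[ℂ] H := Complex.I • h with hc
  have hcM : c ∈ M := by
    show c ∈ M.toStarSubalgebra
    exact SMulMemClass.smul_mem _ hM
  have hstarc : star c = -c := by
    rw [hc, star_smul, hsa.star_eq, Complex.star_def, Complex.conj_I, neg_smul]
  have hstar_exp : ∀ t : ℝ, star (NormedSpace.exp ((t : ℂ) • c))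
      = NormedSpace.exp (-((t : ℂ) • c)) := by
    intro t
    rw [NormedSpace.star_exp, star_smul, hstarc, Complex.star_def, Complex.conj_ofReal,
      smul_neg]
  have key : ∀ ξ : H, (⟪ξ, (h * a) ξ⟫ : ℂ).im = 0 := by
    intro ξ
    -- the continuous linear functional `T ↦ ⟪ξ, T (a ξ)⟫`
    set L : (H →L[ℂ] H) →L[ℂ] ℂ :=
      (innerSL ℂ ξ).comp (ContinuousLinearMap.apply ℂ H (a ξ)) with hLdef
    have hL : ∀ T : H →L[ℂ] H, L T = ⟪ξ, T (a ξ)⟫ := fun T => rfl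
    -- derivative of the path of unitaries
    have hG : HasDerivAt (fun w : ℂ => L (NormedSpace.exp (w • c))) (L c) ((0 : ℝ) : ℂ) := by
      have h1 := hasDerivAt_exp_smul_const (𝕂 := ℂ) c ((0 : ℝ) : ℂ)
      have h2 := L.hasFDerivAt.comp_hasDerivAt _ h1
      rw [show (((0 : ℝ) : ℂ) • c) = 0 by simp, NormedSpace.exp_zero, one_mul] at h2
      exact h2
    have hg : HasDerivAt (fun t : ℝ => (L (NormedSpace.exp ((t : ℂ) • c))).re) (L c).re 0 :=
      hG.real_of_complex
    -- 0 is a global (hence local) maximum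
    have hmax : IsLocalMax (fun t : ℝ => (L (NormedSpace.exp ((t : ℂ) • c))).re) 0 := by
      apply Filter.Eventually.of_forall
      intro t
      set u : H →L[ℂ] H := NormedSpace.exp ((t : ℂ) • c) with hu
      have huM : u ∈ M := exp_mem M _ (by
        show ((t : ℂ) • c) ∈ M.toStarSubalgebra
        exact SMulMemClass.smul_mem _ hcM)
      have hu1 : star u * u = 1 := by
        letI : NormedAlgebra ℚ (H →L[ℂ] H) := .restrictScalars ℚ ℂ (H →L[ℂ] H)
        rw [hu, hstar_exp, ← NormedSpace.exp_add_of_commute ((Commute.refl _).neg_left),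
          neg_add_cancel, NormedSpace.exp_zero]
      have hu2 : u * star u = 1 := by
        letI : NormedAlgebra ℚ (H →L[ℂ] H) := .restrictScalars ℚ ℂ (H →L[ℂ] H)
        rw [hu, hstar_exp, ← NormedSpace.exp_add_of_commute ((Commute.refl _).neg_right),
          add_neg_cancel, NormedSpace.exp_zero]
      have habs := hyp u huM hu1 hu2 ξ
      have habs' : ‖⟪(u * a) ξ, ξ⟫‖ ≤ (⟪a ξ, ξ⟫ : ℂ).re := by
        have := (Complex.le_def.mp habs).1
        simpa using this
      have hre1 : (L u).re = (⟪(u * a) ξ, ξ⟫ : ℂ).re := by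
        rw [hL]
        have he : (⟪(u * a) ξ, ξ⟫ : ℂ) = starRingEnd ℂ ⟪ξ, u (a ξ)⟫ := by
          rw [inner_conj_symm]; rfl
        rw [he, Complex.conj_re]
      have hre0 : (L (NormedSpace.exp (((0 : ℝ) : ℂ) • c))).re = (⟪a ξ, ξ⟫ : ℂ).re := by
        rw [show (((0 : ℝ) : ℂ) • c) = 0 by simp, NormedSpace.exp_zero, hL]
        have he : (⟪a ξ, ξ⟫ : ℂ) = starRingEnd ℂ ⟪ξ, a ξ⟫ := by
          rw [inner_conj_symm]
        rw [show ((1 : H →L[ℂ] H) (a ξ)) = a ξ from rfl, he, Complex.conj_re]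
      calc (L (NormedSpace.exp ((t : ℂ) • c))).re
          = (⟪(u * a) ξ, ξ⟫ : ℂ).re := hre1
        _ ≤ ‖⟪(u * a) ξ, ξ⟫‖ := Complex.re_le_norm _
        _ ≤ (⟪a ξ, ξ⟫ : ℂ).re := habs'
        _ = (L (NormedSpace.exp (((0 : ℝ) : ℂ) • c))).re := hre0.symm
    have hzero : (L c).re = 0 := hmax.hasDerivAt_eq_zero hg
    -- unpack `L c`
    have hLc : L c = Complex.I * ⟪ξ, (h * a) ξ⟫ := by
      rw [hL]
      rw [show c (a ξ) = Complex.I • (h (a ξ)) from rfl, inner_smul_right]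
      rfl
    rw [hLc] at hzero
    simpa [Complex.mul_re, Complex.I_re, Complex.I_im] using hzero
  -- `h * a` is symmetric, hence selfadjoint
  have hsym : (↑(h * a) : H →ₗ[ℂ] H).IsSymmetric := by
    rw [LinearMap.isSymmetric_iff_inner_map_self_real]
    intro v
    have h1 : (⟪(h * a) v, v⟫ : ℂ) = starRingEnd ℂ ⟪v, (h * a) v⟫ := by
      rw [inner_conj_symm]
    have h2 : starRingEnd ℂ ⟪v, (h * a) v⟫ = ⟪v, (h * a) v⟫ :=
      Complex.conj_eq_iff_im.mpr (key v)
    show starRingEnd ℂ (⟪(h * a) v, v⟫ : ℂ) = ⟪(h * a) v, v⟫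
    calc starRingEnd ℂ (⟪(h * a) v, v⟫ : ℂ)
        = starRingEnd ℂ (starRingEnd ℂ ⟪v, (h * a) v⟫) := by rw [← h1]
      _ = ⟪v, (h * a) v⟫ := Complex.conj_conj _
      _ = starRingEnd ℂ ⟪v, (h * a) v⟫ := h2.symm
      _ = ⟪(h * a) v, v⟫ := h1.symm
  have hsa2 : IsSelfAdjoint (h * a) :=
    ContinuousLinearMap.isSelfAdjoint_iff_isSymmetric.mpr hsym
  have hstar : star (h * a) = a * h := by
    rw [star_mul, hsa.star_eq, hpos.isSelfAdjoint.star_eq]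
  rw [← hstar]
  exact hsa2.star_eq

end GardnerAux

end

/-- Vector-state form of the Gardner-type characterization: a positive element `a` of a
von Neumann algebra `M` is central iff `|⟨u a ξ, ξ⟩| ≤ ⟨a ξ, ξ⟩` for every unitary
`u ∈ M` and every vector `ξ`. -/
theorem central_iff_abs_inner_le {H : Type*} [NormedAddCommGroup H]
    [InnerProductSpace ℂ H] [CompleteSpace H] (M : VonNeumannAlgebra H)
    (a : H →L[ℂ] H) (haM : a ∈ M) (hpos : a.IsPositive) :
    (∀ b ∈ M, a * b = b * a) ↔
      ∀ u : H →L[ℂ] H, u ∈ M → star u * u = 1 → u * star u = 1 →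
        ∀ ξ : H, (‖⟪(u * a) ξ, ξ⟫‖ : ℂ) ≤ ⟪a ξ, ξ⟫ := by
  constructor
  · -- forward direction: centrality gives the inequality
    intro hcomm u huM hu1 hu2 ξ
    have h0 : (0 : H →L[ℂ] H) ≤ a := (ContinuousLinearMap.nonneg_iff_isPositive a).2 hpos
    set b : H →L[ℂ] H := CFC.sqrt a with hbdef
    have hb2 : b * b = a := CFC.sqrt_mul_sqrt_self a h0
    have hbpos : (0 : H →L[ℂ] H) ≤ b := CFC.sqrt_nonneg a
    have hbsa : IsSelfAdjoint b :=
      ((ContinuousLinearMap.nonneg_iff_isPositive b).1 hbpos).isSelfAdjoint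
    have hbadj : ContinuousLinearMap.adjoint b = b :=
      ContinuousLinearMap.isSelfAdjoint_iff'.mp hbsa
    have happ : ∀ x y : H, (⟪b x, y⟫ : ℂ) = ⟪x, b y⟫ := by
      intro x y
      conv_lhs => rw [← hbadj]
      exact ContinuousLinearMap.adjoint_inner_left b y x
    have hiso : ∀ x y : H, (⟪u x, u y⟫ : ℂ) = ⟪x, y⟫ := by
      intro x y
      have h1 : (⟪u x, u y⟫ : ℂ) = ⟪x, (ContinuousLinearMap.adjoint u) (u y)⟫ :=
        (ContinuousLinearMap.adjoint_inner_right u x (u y)).symm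
      rw [h1, ← ContinuousLinearMap.star_eq_adjoint,
        show (star u) (u y) = (star u * u) y from rfl, hu1]
      rfl
    have hau : a * u = u * a := hcomm u huM
    have e1 : (⟪(u * a) ξ, ξ⟫ : ℂ) = ⟪b (u ξ), b ξ⟫ := by
      have hx : (u * a) ξ = b (b (u ξ)) := by rw [← hau, ← hb2]; rfl
      rw [hx]
      exact happ (b (u ξ)) ξ
    have hval : ∀ x : H, (⟪b x, b x⟫ : ℂ) = ⟪x, a x⟫ := by
      intro x
      rw [happ, ← hb2]; rfl
    -- `‖b (u ξ)‖ = ‖b ξ‖`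
    have hsq : (⟪b (u ξ), b (u ξ)⟫ : ℂ) = ⟪b ξ, b ξ⟫ := by
      rw [hval, hval]
      have hx : a (u ξ) = u (a ξ) := congrArg (fun T : H →L[ℂ] H => T ξ) hau
      rw [hx, hiso]
    have hsqR : ‖b (u ξ)‖ ^ 2 = ‖b ξ‖ ^ 2 := by
      rw [← inner_self_eq_norm_sq (𝕜 := ℂ), ← inner_self_eq_norm_sq (𝕜 := ℂ), hsq]
    have hnorm : ‖b (u ξ)‖ = ‖b ξ‖ := by
      have := congrArg Real.sqrt hsqR
      simpa [Real.sqrt_sq (norm_nonneg _)] using this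
    -- the quadratic form of `a` is the self-inner-product of `b ξ`
    have hvform : (⟪a ξ, ξ⟫ : ℂ) = ⟪b ξ, b ξ⟫ := by
      calc (⟪a ξ, ξ⟫ : ℂ) = starRingEnd ℂ ⟪ξ, a ξ⟫ := by rw [inner_conj_symm]
        _ = starRingEnd ℂ ⟪b ξ, b ξ⟫ := by rw [hval]
        _ = ⟪b ξ, b ξ⟫ := inner_conj_symm (b ξ) (b ξ)
    have him : (⟪b ξ, b ξ⟫ : ℂ).im = 0 :=
      Complex.conj_eq_iff_im.mp (inner_conj_symm (b ξ) (b ξ))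
    have hre : (⟪b ξ, b ξ⟫ : ℂ).re = ‖b ξ‖ ^ 2 := by
      have := inner_self_eq_norm_sq (𝕜 := ℂ) (x := b ξ)
      simpa using this
    have hineq : ‖⟪(u * a) ξ, ξ⟫‖ ≤ ‖b ξ‖ ^ 2 := by
      rw [e1]
      calc ‖(⟪b (u ξ), b ξ⟫ : ℂ)‖ ≤ ‖b (u ξ)‖ * ‖b ξ‖ := norm_inner_le_norm _ _
        _ = ‖b ξ‖ ^ 2 := by rw [hnorm]; ring
    rw [hvform]
    rw [Complex.le_def]
    constructor
    · rw [hre]; simpa using hineq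
    · rw [him]; simp
  · -- backward direction
    intro hyp b hbM
    have hcore := GardnerAux.comm_selfadjoint M a hpos hyp
    have hhsa : IsSelfAdjoint (b + star b) := by
      rw [IsSelfAdjoint, star_add, star_star, add_comm]
    have hksa : IsSelfAdjoint (Complex.I • (b - star b)) := by
      rw [IsSelfAdjoint, star_smul, star_sub, star_star, Complex.star_def, Complex.conj_I,
        neg_smul, smul_sub, smul_sub, neg_sub]
    have e1 : a * (b + star b) = (b + star b) * a :=
      hcore _ (add_mem hbM (star_mem hbM)) hhsa
    have e2' : a * (Complex.I • (b - star b)) = (Complex.I • (b - star b)) * a :=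
      hcore _ (by
        show Complex.I • (b - star b) ∈ M.toStarSubalgebra
        exact SMulMemClass.smul_mem _ (sub_mem hbM (star_mem hbM))) hksa
    have e2 : a * (b - star b) = (b - star b) * a := by
      have h1 : Complex.I • (a * (b - star b)) = Complex.I • ((b - star b) * a) := by
        rw [← mul_smul_comm, ← smul_mul_assoc, e2']
      exact smul_right_injective (H →L[ℂ] H) Complex.I_ne_zero h1
    have e3 : a * (b + b) = (b + b) * a := by
      have habel : (b + star b) + (b - star b) = b + b := by abel
      rw [← habel, mul_add, e1, e2, ← add_mul]
    have h2 : (2 : ℂ) • (a * b) = (2 : ℂ) • (b * a) := by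
      have hl : a * (b + b) = (2 : ℂ) • (a * b) := by
        rw [mul_add, two_smul]
      have hr : (b + b) * a = (2 : ℂ) • (b * a) := by
        rw [add_mul, two_smul]
      rw [← hl, ← hr, e3]
    exact smul_right_injective (H →L[ℂ] H) two_ne_zero h2
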